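/- Let a1, a2 > 0, b > −1, 0 < z < 1, and let L be the generalized-Hahn moment functional L[f] = Σ_{x=0}^{∞} f(x)·(a1)_x (a2)_x z^x / ((b+1)_x x!). Let (P_n)_{n≥0} be a monic orthogonal polynomial sequence for L with recurrence coefficients β_n, γ_n. Then the initial data satisfy β_0 = μ_1/μ_0, where μ_0 = Σ_{x=0}^{∞} (a1)_x (a2)_x z^x/((b+1)_x x!) and μ_1 = Σ_{x=0}^{∞} x·(a1)_x (a2)_x z^x/((b+1)_x x!), and (1−z)·[γ_1 + (β_0 + a1)(β_0 + a2)] = (a1 + a2 − b)β_0 + a1 a2. -/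

import Mathlib

open Polynomial Filter Topology

private lemma tendsto_shift_div (c d : ℝ) :
    Tendsto (fun x : ℕ => (c + x) / (d + x)) atTop (𝓝 1) := by
  have h0 : Tendsto (fun x : ℕ => ((x : ℝ))⁻¹) atTop (𝓝 0) :=
    tendsto_inv_atTop_zero.comp tendsto_natCast_atTop_atTop
  have hc : Tendsto (fun x : ℕ => c * ((x : ℝ))⁻¹ + 1) atTop (𝓝 1) := by
    simpa using (h0.const_mul c).add tendsto_const_nhds
  have hd : Tendsto (fun x : ℕ => d * ((x : ℝ))⁻¹ + 1) atTop (𝓝 1) := by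
    simpa using (h0.const_mul d).add tendsto_const_nhds
  have := hc.div hd one_ne_zero
  rw [div_one] at this
  refine Tendsto.congr' ?_ this
  filter_upwards [eventually_ge_atTop 1] with x hx
  have hx0 : ((x : ℝ)) ≠ 0 := by
    have : (1 : ℝ) ≤ (x : ℝ) := by exact_mod_cast hx
    linarith
  have e1 : c * ((x : ℝ))⁻¹ + 1 = (c + x) / x := by field_simp
  have e2 : d * ((x : ℝ))⁻¹ + 1 = (d + x) / x := by field_simp
  simp only [Pi.div_apply, e1, e2]
  rw [div_div_div_cancel_right₀ hx0]

private lemma hahn_w_succ (a1 a2 b z : ℝ) (ha1 : 0 < a1) (ha2 : 0 < a2) (hb : 0 < b + 1)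
    (w : ℕ → ℝ)
    (hw : ∀ x : ℕ, w x =
      (ascPochhammer ℝ x).eval a1 * (ascPochhammer ℝ x).eval a2 * z ^ x /
        ((ascPochhammer ℝ x).eval (b + 1) * x.factorial)) (n : ℕ) :
    w (n + 1) * (((b + 1) + n) * ((n : ℝ) + 1)) = w n * (z * ((a1 + n) * (a2 + n))) := by
  have A1 := (ascPochhammer_pos n a1 ha1).ne'
  have A2 := (ascPochhammer_pos n a2 ha2).ne'
  have B := (ascPochhammer_pos n (b+1) hb).ne'
  have F : ((n.factorial : ℝ)) ≠ 0 := Nat.cast_ne_zero.2 n.factorial_ne_zero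
  rw [hw (n+1), hw n, ascPochhammer_succ_eval, ascPochhammer_succ_eval,
    ascPochhammer_succ_eval, Nat.factorial_succ]
  push_cast
  field_simp
  ring

private lemma hahn_w_pos (a1 a2 b z : ℝ) (ha1 : 0 < a1) (ha2 : 0 < a2) (hb : 0 < b + 1)
    (hz0 : 0 < z)
    (w : ℕ → ℝ)
    (hw : ∀ x : ℕ, w x =
      (ascPochhammer ℝ x).eval a1 * (ascPochhammer ℝ x).eval a2 * z ^ x /
        ((ascPochhammer ℝ x).eval (b + 1) * x.factorial)) (n : ℕ) :
    0 < w n := by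
  rw [hw n]
  have A1 := ascPochhammer_pos n a1 ha1
  have A2 := ascPochhammer_pos n a2 ha2
  have B := ascPochhammer_pos n (b+1) hb
  have F : (0:ℝ) < n.factorial := by exact_mod_cast n.factorial_pos
  positivity

private lemma hahn_summable (a1 a2 b z : ℝ) (ha1 : 0 < a1) (ha2 : 0 < a2) (hb : 0 < b + 1)
    (hz0 : 0 < z) (hz1 : z < 1)
    (w : ℕ → ℝ)
    (hw : ∀ x : ℕ, w x =
      (ascPochhammer ℝ x).eval a1 * (ascPochhammer ℝ x).eval a2 * z ^ x /
        ((ascPochhammer ℝ x).eval (b + 1) * x.factorial)) (k : ℕ) :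
    Summable (fun x : ℕ => ((x : ℝ) + 1) ^ k * w x) := by
  have wpos := hahn_w_pos a1 a2 b z ha1 ha2 hb hz0 w hw
  have fpos : ∀ n : ℕ, 0 < ((n : ℝ) + 1) ^ k * w n := fun n => by
    have := wpos n; positivity
  refine summable_of_ratio_test_tendsto_lt_one hz1
    (Eventually.of_forall fun n => (fpos n).ne') ?_
  have hT : Tendsto (fun n : ℕ =>
      ((2 + (n:ℝ)) / (1 + (n:ℝ))) ^ k *
        (z * (((a1 + (n:ℝ)) / (1 + (n:ℝ))) * ((a2 + (n:ℝ)) / ((b + 1) + (n:ℝ)))))) atTop (𝓝 z) := by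
    have := ((tendsto_shift_div 2 1).pow k).mul
      ((tendsto_const_nhds (x := z) (f := atTop)).mul
        ((tendsto_shift_div a1 1).mul (tendsto_shift_div a2 (b+1))))
    simpa using this
  refine Tendsto.congr (fun n => ?_) hT
  have hb' : ((b:ℝ) + 1 + n) ≠ 0 := by positivity
  have h1 : ((n:ℝ) + 1) ≠ 0 := by positivity
  have hrec := hahn_w_succ a1 a2 b z ha1 ha2 hb w hw n
  have hwn := (wpos n).ne'
  rw [Real.norm_eq_abs, Real.norm_eq_abs, abs_of_pos (fpos (n+1)), abs_of_pos (fpos n)]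
  push_cast
  have hw1 : w (n+1) = w n * (z * ((a1 + n) * (a2 + n))) / (((b+1) + (n:ℝ)) * ((n:ℝ) + 1)) := by
    rw [eq_div_iff (by positivity)]
    exact hrec
  rw [div_pow, hw1]
  field_simp
  ring

/-- initial conditions for the Laguerre–Freud equations of the
generalized Hahn polynomials of type I: β₀ = μ₁/μ₀ and
(1−z)[γ₁ + (β₀+a₁)(β₀+a₂)] = (a₁+a₂−b)β₀ + a₁a₂. -/
theorem generalized_hahn_initial_conditions
    (a1 a2 b z : ℝ) (ha1 : 0 < a1) (ha2 : 0 < a2) (hb : -1 < b)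
    (hz0 : 0 < z) (hz1 : z < 1)
    (w : ℕ → ℝ)
    (hw : ∀ x : ℕ, w x =
      (ascPochhammer ℝ x).eval a1 * (ascPochhammer ℝ x).eval a2 * z ^ x /
        ((ascPochhammer ℝ x).eval (b + 1) * x.factorial))
    (P : ℕ → Polynomial ℝ) (h : ℕ → ℝ)
    (hmonic : ∀ n, (P n).Monic) (hdeg : ∀ n, (P n).natDegree = n)
    (hh : ∀ n, h n ≠ 0)
    (horth : ∀ n m : ℕ,
      (∑' x : ℕ, (P n * P m).eval (x : ℝ) * w x) = if n = m then h n else 0)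
    (β γ : ℕ → ℝ) (hγ0 : γ 0 = 0)
    (hrec : ∀ n : ℕ, X * P n = P (n + 1) + C (β n) * P n + C (γ n) * P (n - 1)) :
    β 0 = (∑' x : ℕ, (x : ℝ) * w x) / (∑' x : ℕ, w x) ∧
    (1 - z) * (γ 1 + (β 0 + a1) * (β 0 + a2)) = (a1 + a2 - b) * β 0 + a1 * a2 := by
  have hb1 : (0:ℝ) < b + 1 := by linarith
  have wpos := hahn_w_pos a1 a2 b z ha1 ha2 hb1 hz0 w hw
  -- summability
  have Spow : ∀ k : ℕ, Summable (fun x : ℕ => (x:ℝ)^k * w x) := by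
    intro k
    refine (hahn_summable a1 a2 b z ha1 ha2 hb1 hz0 hz1 w hw k).of_nonneg_of_le
      (fun x => mul_nonneg (by positivity) (wpos x).le) (fun x => ?_)
    exact mul_le_mul_of_nonneg_right
      (pow_le_pow_left₀ (Nat.cast_nonneg x) (by linarith) k) (wpos x).le
  have S0 : Summable w := (Spow 0).congr fun x => by simp
  have S1 : Summable (fun x : ℕ => (x:ℝ) * w x) := (Spow 1).congr fun x => by ring
  have S2 : Summable (fun x : ℕ => (x:ℝ)^2 * w x) := Spow 2
  -- quadratic moments helper
  have quad : ∀ c2 c1 c0 : ℝ, (∑' x : ℕ, (c2*(x:ℝ)^2 + c1*(x:ℝ) + c0) * w x)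
      = c2 * (∑' x : ℕ, (x:ℝ)^2 * w x) + c1 * (∑' x : ℕ, (x:ℝ) * w x)
        + c0 * (∑' x : ℕ, w x) := by
    intro c2 c1 c0
    rw [tsum_congr (fun x : ℕ => show (c2*(x:ℝ)^2 + c1*(x:ℝ) + c0) * w x
        = c2*((x:ℝ)^2*w x) + (c1*((x:ℝ)*w x) + c0*(w x)) from by ring)]
    rw [Summable.tsum_add (S2.mul_left c2) ((S1.mul_left c1).add (S0.mul_left c0)),
      Summable.tsum_add (S1.mul_left c1) (S0.mul_left c0), tsum_mul_left, tsum_mul_left,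
      tsum_mul_left, add_assoc]
  -- identify initial polynomials
  have hP0 : P 0 = 1 := eq_one_of_monic_natDegree_zero (hmonic 0) (hdeg 0)
  have hP1 : P 1 = X - C (β 0) := by
    have h0 := hrec 0
    rw [hγ0, hP0] at h0
    simp only [map_zero, zero_mul, mul_one, zero_add] at h0
    linear_combination -h0
  have hP2 : P 2 = (X - C (β 1)) * (X - C (β 0)) - C (γ 1) := by
    have h1 := hrec 1
    simp only [Nat.sub_self] at h1
    rw [hP0] at h1
    linear_combination (X - C (β 1)) * hP1 - h1
  -- orthogonality equations in moment form
  have E0 : (∑' x : ℕ, w x) = h 0 := by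
    have h00 := horth 0 0
    rw [if_pos rfl] at h00
    rw [← h00]
    exact tsum_congr fun x => by rw [hP0]; simp
  have hμ0 : (∑' x : ℕ, w x) ≠ 0 := by rw [E0]; exact hh 0
  have E1 : (1:ℝ) * (∑' x : ℕ, (x:ℝ) * w x) + (-(β 0)) * (∑' x : ℕ, w x) = 0 := by
    have h10 := horth 1 0
    rw [if_neg one_ne_zero] at h10
    have := tsum_congr (L := SummationFilter.unconditional ℕ) (fun x : ℕ => show (P 1 * P 0).eval (x:ℝ) * w x
        = ((0:ℝ)*(x:ℝ)^2 + 1*(x:ℝ) + (-(β 0))) * w x from by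
      rw [hP0, hP1]; simp only [eval_mul, eval_sub, eval_add, eval_one, eval_X, eval_C, mul_one]; ring)
    rw [this, quad] at h10
    linear_combination h10
  have E2 : (∑' x : ℕ, (x:ℝ)^2 * w x)
      + (-(β 1 + β 0)) * (∑' x : ℕ, (x:ℝ) * w x)
      + (β 1 * β 0 - γ 1) * (∑' x : ℕ, w x) = 0 := by
    have h20 := horth 2 0
    rw [if_neg two_ne_zero] at h20
    have := tsum_congr (L := SummationFilter.unconditional ℕ) (fun x : ℕ => show (P 2 * P 0).eval (x:ℝ) * w x
        = ((1:ℝ)*(x:ℝ)^2 + (-(β 1 + β 0))*(x:ℝ) + (β 1 * β 0 - γ 1)) * w x from by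
      rw [hP0, hP2]; simp only [eval_mul, eval_sub, eval_add, eval_one, eval_X, eval_C, mul_one]; ring)
    rw [this, quad] at h20
    linear_combination h20
  -- the structural (Pearson-type) relation between the moments
  have Sg : Summable (fun x : ℕ => ((1:ℝ)*(x:ℝ)^2 + b*(x:ℝ) + 0) * w x) :=
    (S2.add (S1.mul_left b)).congr fun x => by ring
  have hkey : (1:ℝ) * (∑' x : ℕ, (x:ℝ)^2 * w x) + b * (∑' x : ℕ, (x:ℝ) * w x)
        + 0 * (∑' x : ℕ, w x)
      = z * ((1:ℝ) * (∑' x : ℕ, (x:ℝ)^2 * w x) + (a1+a2) * (∑' x : ℕ, (x:ℝ) * w x)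
        + (a1*a2) * (∑' x : ℕ, w x)) := by
    rw [← quad, ← quad, Summable.tsum_eq_zero_add Sg]
    have hzero : ((1:ℝ)*((0:ℕ):ℝ)^2 + b*((0:ℕ):ℝ) + 0) * w 0 = 0 := by norm_num
    rw [hzero, zero_add, ← tsum_mul_left]
    refine tsum_congr fun n => ?_
    have hr := hahn_w_succ a1 a2 b z ha1 ha2 hb1 w hw n
    push_cast
    linear_combination hr
  -- final algebra
  have hm1 : (∑' x : ℕ, (x:ℝ) * w x) = β 0 * (∑' x : ℕ, w x) := by
    linear_combination E1
  have hm2 : (∑' x : ℕ, (x:ℝ)^2 * w x)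
      = β 0 * (∑' x : ℕ, (x:ℝ) * w x) + γ 1 * (∑' x : ℕ, w x) := by
    linear_combination E2 + (β 1) * hm1
  have hq' : z * ((β 0)^2 + γ 1 + (a1+a2) * β 0 + a1*a2) * (∑' x : ℕ, w x)
      = ((β 0)^2 + γ 1 + b * β 0) * (∑' x : ℕ, w x) := by
    linear_combination (-1:ℝ) * hkey + (1 - z) * hm2
      + (b - z*(a1+a2) + (1-z)*(β 0)) * hm1
  have hq := mul_right_cancel₀ hμ0 hq'
  refine ⟨?_, ?_⟩
  · rw [eq_div_iff hμ0]
    linear_combination hm1.symm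
  · linear_combination -hq
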